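/- Let A be a symmetric bilinear form on a real vector space, let U, U_h, X_h be elements, λ, λ_h real numbers, and u, u_h, x_h elements of an inner product space with ‖u‖ = ‖u_h‖ = 1. Assume A(U_h, U_h) = -λ_h, A(U_h, V) = -λ_h (u_h, v) for V ∈ {X_h} with corresponding scalar component x_h, and (u_h, x_h) = (u_h, u). Then λ - λ_h = -A(U,U) + A(X_h, X_h) - A(U_h - X_h, U_h - X_h) - λ_h ‖u - u_h‖², provided A(U,U) = -λ. -/

import Mathlib

open RealInnerProductSpace

/-- Identity (3.14): eigenvalue error identity used for the lower-bound analysis. -/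
theorem stmt_1
    {U : Type*} [AddCommGroup U] [Module ℝ U]
    {E : Type*} [NormedAddCommGroup E] [InnerProductSpace ℝ E]
    (A : U →ₗ[ℝ] U →ₗ[ℝ] ℝ) (hA : ∀ x y, A x y = A y x)
    (𝒰 𝒰h 𝒳h : U) (lam lamh : ℝ) (u uh xh : E)
    (hu : ‖u‖ = 1) (huh : ‖uh‖ = 1)
    (hUU : A 𝒰 𝒰 = -lam)
    (hUhUh : A 𝒰h 𝒰h = -lamh)
    (hUhXh : A 𝒰h 𝒳h = -lamh * ⟪uh, xh⟫)
    (hx : ⟪uh, xh⟫ = ⟪uh, u⟫) :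
    lam - lamh =
      -A 𝒰 𝒰 + A 𝒳h 𝒳h - A (𝒰h - 𝒳h) (𝒰h - 𝒳h) - lamh * ‖u - uh‖ ^ 2 := by
  have hexp : A (𝒰h - 𝒳h) (𝒰h - 𝒳h)
      = A 𝒰h 𝒰h - 2 * A 𝒰h 𝒳h + A 𝒳h 𝒳h := by
    simp [map_sub, LinearMap.sub_apply, hA 𝒳h 𝒰h]; ring
  have hnorm : ‖u - uh‖ ^ 2 = 2 - 2 * ⟪uh, u⟫ := by
    rw [← real_inner_self_eq_norm_sq]
    rw [inner_sub_sub_self]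
    simp [inner_sub_sub_self, real_inner_self_eq_norm_sq, hu, huh,
      real_inner_comm u uh]
    ring
  rw [hexp, hnorm, hUU, hUhUh, hUhXh, hx]
  ring
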